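/- Let ε = 1/80 and ξ ∈ ℝ² with ξ ≠ 0. Then sup over r > 0 of ∫_{𝕊¹} dσ(ω) / (|ξ − r·ω|^{1−ε} · |ξ + r·ω|^{1−ε}) ≤ C/|ξ|^{2−2ε}, where dσ is the arclength measure on the unit circle 𝕊¹ and C is an absolute constant. -/

import Mathlib

open Set
open scoped Real


open MeasureTheory
open scoped ENNReal

noncomputable section

namespace CircleEst


def iso : ℂ ≃ₗᵢ[ℝ] EuclideanSpace ℝ (Fin 2) := Complex.orthonormalBasisOneI.repr

def f (θ : ℝ) : EuclideanSpace ℝ (Fin 2) := iso (Complex.exp (θ * Complex.I))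

lemma f_lip : LipschitzWith 1 f := by
  have h2 : LipschitzWith 1 (fun θ : ℝ => Complex.exp (θ * Complex.I)) := by
    have h := lipschitzWith_circleMap (0 : ℂ) 1
    have : (fun θ : ℝ => Complex.exp (θ * Complex.I)) = circleMap 0 1 := by
      funext θ; simp [circleMap]
    rw [this]
    simpa using h
  have := iso.lipschitz.comp h2
  simp only [mul_one] at this
  exact this

lemma f_meas : Measurable f := f_lip.continuous.measurable

lemma f_mem (θ : ℝ) : f θ ∈ Metric.sphere (0 : EuclideanSpace ℝ (Fin 2)) 1 := by
  simp [f, mem_sphere_zero_iff_norm, iso.norm_map,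
    Complex.norm_exp_ofReal_mul_I]

lemma f_surj {x : EuclideanSpace ℝ (Fin 2)} (hx : x ∈ Metric.sphere (0 : EuclideanSpace ℝ (Fin 2)) 1) :
    ∃ θ ∈ Icc (0:ℝ) (2*π), f θ = x := by
  set z := iso.symm x with hzdef
  have hzabs : (‖z‖ : ℝ) = 1 := by
    rw [mem_sphere_zero_iff_norm] at hx
    rw [hzdef, iso.symm.norm_map, hx]
  have hz1 : Complex.exp (z.arg * Complex.I) = z := by
    conv_rhs => rw [← Complex.norm_mul_exp_arg_mul_I z]
    rw [hzabs]; simp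
  have hix : iso z = x := iso.apply_symm_apply x
  rcases le_or_gt 0 z.arg with h | h
  · exact ⟨z.arg, ⟨h, by linarith [Complex.arg_le_pi z, Real.pi_pos]⟩,
      by rw [f, hz1, hix]⟩
  · refine ⟨z.arg + 2*π, ⟨by linarith [Complex.neg_pi_lt_arg z, Real.pi_pos], by linarith [Complex.arg_le_pi z]⟩, ?_⟩
    have he : Complex.exp (((z.arg + 2*π : ℝ) : ℂ) * Complex.I) = Complex.exp (z.arg * Complex.I) := by
      push_cast
      rw [add_mul, Complex.exp_add, Complex.exp_two_pi_mul_I, mul_one]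
    rw [f, he, hz1, hix]



lemma norm_sq_sub (z : ℂ) (hz : z ≠ 0) (r θ : ℝ) :
    ‖z - (r : ℂ) * Complex.exp (θ * Complex.I)‖ ^ 2
      = ‖z‖ ^ 2 + r ^ 2 - 2 * r * ‖z‖ * Real.cos (θ - z.arg) := by
  have hre : z.re = ‖z‖ * Real.cos z.arg := by
    rw [Complex.cos_arg hz]
    field_simp [norm_ne_zero_iff.mpr hz]
  have him : z.im = ‖z‖ * Real.sin z.arg := by
    rw [Complex.sin_arg]
    field_simp [norm_ne_zero_iff.mpr hz]
  have hw : ‖z - (r : ℂ) * Complex.exp (θ * Complex.I)‖ ^ 2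
      = (z.re - r * Real.cos θ) ^ 2 + (z.im - r * Real.sin θ) ^ 2 := by
    rw [Complex.sq_norm, Complex.normSq_apply]
    simp [Complex.exp_ofReal_mul_I_re, Complex.exp_ofReal_mul_I_im]
    ring
  rw [hw, hre, him, Real.cos_sub]
  nlinarith [Real.sin_sq_add_cos_sq z.arg, Real.sin_sq_add_cos_sq θ]

lemma norm_sq_add (z : ℂ) (hz : z ≠ 0) (r θ : ℝ) :
    ‖z + (r : ℂ) * Complex.exp (θ * Complex.I)‖ ^ 2
      = ‖z‖ ^ 2 + r ^ 2 + 2 * r * ‖z‖ * Real.cos (θ - z.arg) := by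
  have h := norm_sq_sub z hz (-r) θ
  push_cast at h
  rw [neg_mul, sub_neg_eq_add] at h
  rw [h]; ring

lemma point_bound (z : ℂ) (hz : z ≠ 0) {r : ℝ} (hr : 0 ≤ r) (θ : ℝ)
    {a : ℝ} (ha : 0 < a) (hs : Real.sin (θ - z.arg) ≠ 0) :
    1 / (‖z - (r : ℂ) * Complex.exp (θ * Complex.I)‖ ^ a *
         ‖z + (r : ℂ) * Complex.exp (θ * Complex.I)‖ ^ a)
      ≤ 1 / (‖z‖ ^ (2 * a) * |Real.sin (θ - z.arg)| ^ a) := by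
  set R := ‖z‖ with hRdef
  set c := Real.cos (θ - z.arg) with hcdef
  set s := Real.sin (θ - z.arg) with hsdef
  set A := ‖z - (r : ℂ) * Complex.exp (θ * Complex.I)‖ with hAdef
  set B := ‖z + (r : ℂ) * Complex.exp (θ * Complex.I)‖ with hBdef
  have hR : 0 < R := norm_pos_iff.mpr hz
  have hsc : s ^ 2 + c ^ 2 = 1 := Real.sin_sq_add_cos_sq _
  have h1 : A ^ 2 = R ^ 2 + r ^ 2 - 2 * r * R * c := norm_sq_sub z hz r θ
  have h2 : B ^ 2 = R ^ 2 + r ^ 2 + 2 * r * R * c := norm_sq_add z hz r θ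
  have hA0 : 0 ≤ A := norm_nonneg _
  have hB0 : 0 ≤ B := norm_nonneg _
  have hs0 : 0 < |s| := abs_pos.mpr hs
  have sqle : ∀ x y : ℝ, 0 ≤ x → 0 ≤ y → x ^ 2 ≤ y ^ 2 → x ≤ y := by
    intro x y hx hy h
    nlinarith
  have key : R ^ 2 * |s| ≤ A * B := by
    rcases le_or_gt 0 c with hc | hc
    · have hA : R * |s| ≤ A := by
        refine sqle _ _ (by positivity) hA0 ?_
        have : (R * |s|) ^ 2 = R ^ 2 * s ^ 2 := by rw [mul_pow, sq_abs]
        nlinarith [sq_nonneg (r - R * c)]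
      have hB : R ≤ B := by
        refine sqle _ _ hR.le hB0 ?_
        nlinarith [mul_nonneg (mul_nonneg hr hR.le) hc]
      calc R ^ 2 * |s| = (R * |s|) * R := by ring
        _ ≤ A * B := mul_le_mul hA hB hR.le hA0
    · have hB : R * |s| ≤ B := by
        refine sqle _ _ (by positivity) hB0 ?_
        have : (R * |s|) ^ 2 = R ^ 2 * s ^ 2 := by rw [mul_pow, sq_abs]
        nlinarith [sq_nonneg (r + R * c)]
      have hA : R ≤ A := by
        refine sqle _ _ hR.le hA0 ?_
        nlinarith [mul_nonneg (mul_nonneg hr hR.le) (neg_nonneg.mpr hc.le)]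
      calc R ^ 2 * |s| = R * (R * |s|) := by ring
        _ ≤ A * B := mul_le_mul hA hB (by positivity) hA0
  have hrpow : R ^ (2 * a) * |s| ^ a ≤ A ^ a * B ^ a := by
    have h3 : (R ^ 2 * |s|) ^ a ≤ (A * B) ^ a :=
      Real.rpow_le_rpow (by positivity) key ha.le
    rw [Real.mul_rpow (by positivity) hs0.le, Real.mul_rpow hA0 hB0] at h3
    have h4 : (R ^ 2 : ℝ) ^ a = R ^ (2 * a) := by
      rw [← Real.rpow_natCast R 2, ← Real.rpow_mul hR.le]
      norm_num
    rwa [h4] at h3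
  exact one_div_le_one_div_of_le (by positivity) hrpow



lemma meas_rpow_abs {a : ℝ} (h0 : 0 ≤ a) (t : ℝ) :
    Measurable (fun θ : ℝ => |θ - t| ^ a) :=
  (Real.continuous_rpow_const h0).measurable.comp (measurable_id.sub_const t).abs

lemma pos_fin {a : ℝ} (h0 : 0 < a) (h1 : a < 1) {b : ℝ} (hb : 0 ≤ b) :
    ∫⁻ u in Icc (0:ℝ) b, ENNReal.ofReal (1 / |u| ^ a) < ⊤ := by
  rw [← Measure.restrict_congr_set Ioc_ae_eq_Icc]
  have hcong : ∀ u ∈ Ioc (0:ℝ) b,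
      ENNReal.ofReal (1 / |u| ^ a) = ENNReal.ofReal (u ^ (-a)) := by
    intro u hu
    rw [abs_of_pos hu.1, Real.rpow_neg hu.1.le, one_div]
  rw [setLIntegral_congr_fun measurableSet_Ioc hcong]
  have hint : IntegrableOn (fun u : ℝ => u ^ (-a)) (Ioc 0 b) volume := by
    have h := intervalIntegral.intervalIntegrable_rpow' (r := -a)
      (show (-1:ℝ) < -a by linarith) (a := 0) (b := b)
    rwa [intervalIntegrable_iff, uIoc_of_le hb] at h
  calc ∫⁻ u in Ioc (0:ℝ) b, ENNReal.ofReal (u ^ (-a))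
      ≤ ∫⁻ u in Ioc (0:ℝ) b, (‖u ^ (-a)‖₊ : ℝ≥0∞) :=
        lintegral_mono fun u => Real.ofReal_le_enorm _
    _ < ⊤ := hint.2

lemma base_fin {a : ℝ} (h0 : 0 < a) (h1 : a < 1) {b : ℝ} (hb : 0 ≤ b) :
    ∫⁻ u in Icc (-b) b, ENNReal.ofReal (1 / |u| ^ a) < ⊤ := by
  have hneg : ∫⁻ u in Icc (-b) (0:ℝ), ENNReal.ofReal (1 / |u| ^ a)
      = ∫⁻ u in Icc (0:ℝ) b, ENNReal.ofReal (1 / |u| ^ a) := by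
    have hmp : MeasurePreserving (fun x : ℝ => -x) volume volume :=
      Measure.measurePreserving_neg _
    have hemb : MeasurableEmbedding (fun x : ℝ => -x) :=
      (MeasurableEquiv.neg ℝ).measurableEmbedding
    have hcomp := hmp.setLIntegral_comp_emb hemb
      (fun u => ENNReal.ofReal (1 / |u| ^ a)) (Icc 0 b)
    simp only [abs_neg] at hcomp
    have himg : (fun x : ℝ => -x) '' Icc 0 b = Icc (-b) 0 := by
      ext x
      constructor
      · rintro ⟨y, hy, rfl⟩
        exact ⟨show -b ≤ -y by linarith [hy.2], show -y ≤ 0 by linarith [hy.1]⟩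
      · intro hx
        exact ⟨-x, ⟨by linarith [hx.2], by linarith [hx.1]⟩, by ring⟩
    rw [himg] at hcomp
    exact hcomp.symm
  have hsub : Icc (-b) b ⊆ Icc (-b) 0 ∪ Icc 0 b := by
    intro x hx
    rcases le_or_gt x 0 with h | h
    · exact Or.inl ⟨hx.1, h⟩
    · exact Or.inr ⟨h.le, hx.2⟩
  calc ∫⁻ u in Icc (-b) b, ENNReal.ofReal (1 / |u| ^ a)
      ≤ ∫⁻ u in Icc (-b) 0 ∪ Icc 0 b, ENNReal.ofReal (1 / |u| ^ a) :=
        lintegral_mono_set hsub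
    _ ≤ (∫⁻ u in Icc (-b) 0, ENNReal.ofReal (1 / |u| ^ a))
        + ∫⁻ u in Icc (0:ℝ) b, ENNReal.ofReal (1 / |u| ^ a) :=
        lintegral_union_le _ _ _
    _ < ⊤ := by
        rw [hneg]
        have := pos_fin h0 h1 hb
        exact ENNReal.add_lt_top.mpr ⟨this, this⟩

lemma single_fin {a : ℝ} (h0 : 0 < a) (h1 : a < 1) {t : ℝ} (ht : |t| ≤ 4*π) :
    ∫⁻ θ in Icc (-(4*π)) (4*π), ENNReal.ofReal (1 / |θ - t| ^ a) < ⊤ := by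
  have hπ := Real.pi_pos
  have hmp : MeasurePreserving (fun x : ℝ => x - t) volume volume :=
    measurePreserving_sub_right volume t
  have hemb : MeasurableEmbedding (fun x : ℝ => x - t) :=
    (MeasurableEquiv.subRight t).measurableEmbedding
  have hcomp := hmp.setLIntegral_comp_emb hemb
    (fun u => ENNReal.ofReal (1 / |u| ^ a)) (Icc (-(4*π)) (4*π))
  rw [hcomp, Set.image_sub_const_Icc]
  have h2 := abs_le.mp ht
  calc ∫⁻ u in Icc (-(4*π) - t) (4*π - t), ENNReal.ofReal (1 / |u| ^ a)
      ≤ ∫⁻ u in Icc (-(8*π)) (8*π), ENNReal.ofReal (1 / |u| ^ a) :=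
        lintegral_mono_set (Icc_subset_Icc (by linarith) (by linarith))
    _ < ⊤ := base_fin h0 h1 (by positivity)

lemma sin_pointwise {a : ℝ} (h0 : 0 < a) {θ : ℝ} (hθ : θ ∈ Icc (-(4*π)) (4*π)) :
    1 / |Real.sin θ| ^ a
      ≤ (π/2) ^ a * ∑ k ∈ Finset.Icc (-4 : ℤ) 4, 1 / |θ - k * π| ^ a := by
  have hπ := Real.pi_pos
  rcases eq_or_ne (Real.sin θ) 0 with hs | hs
  · rw [hs, abs_zero, Real.zero_rpow h0.ne', div_zero]
    have : (0:ℝ) ≤ ∑ k ∈ Finset.Icc (-4 : ℤ) 4, 1 / |θ - k * π| ^ a :=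
      Finset.sum_nonneg fun k _ => by positivity
    positivity
  · set k := round (θ / π) with hk
    have h1 : |θ / π - k| ≤ 1/2 := abs_sub_round (θ / π)
    have h2 : |θ - k * π| ≤ π / 2 := by
      have he : θ - ↑k*π = (θ/π - ↑k) * π := by
        rw [sub_mul, div_mul_cancel₀ _ hπ.ne']
      rw [he, abs_mul, abs_of_pos hπ]
      nlinarith
    have hmem : k ∈ Finset.Icc (-4 : ℤ) 4 := by
      have habs := abs_le.mp h1
      have hl : (-4 : ℝ) ≤ θ / π := by rw [le_div_iff₀ hπ]; nlinarith [hθ.1]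
      have hr : θ / π ≤ 4 := by rw [div_le_iff₀ hπ]; nlinarith [hθ.2]
      have h5 : (k : ℝ) < 5 := by linarith
      have h6 : (-5 : ℝ) < (k : ℝ) := by linarith
      have h5' : k < 5 := by exact_mod_cast h5
      have h6' : (-5 : ℤ) < k := by exact_mod_cast h6
      rw [Finset.mem_Icc]
      omega
    have h3 : |Real.sin θ| = |Real.sin (θ - k*π)| := by
      conv_lhs => rw [show θ = (θ - k*π) + k*π by ring]
      rw [Real.sin_add_int_mul_pi, abs_mul]
      rcases Int.even_or_odd k with h | h
      · rw [h.neg_one_zpow, abs_one, one_mul]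
      · rw [h.neg_one_zpow, abs_neg, abs_one, one_mul]
    have hsin : (2/π) * |θ - k*π| ≤ |Real.sin θ| := by
      rw [h3]
      exact Real.mul_abs_le_abs_sin h2
    have hne : θ - k*π ≠ 0 := by
      intro h
      exact hs (by rw [show θ = (k:ℝ)*π by linarith]; exact Real.sin_int_mul_pi k)
    have habs : (0:ℝ) < |θ - k*π| := abs_pos.mpr hne
    have hstep : 1 / |Real.sin θ| ^ a ≤ (π/2) ^ a * (1 / |θ - k*π| ^ a) := by
      have hrw : ((2/π) * |θ - k*π|) ^ a = (2/π)^a * |θ - k*π|^a :=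
        Real.mul_rpow (by positivity) habs.le
      have h4 : ((2/π) * |θ - k*π|) ^ a ≤ |Real.sin θ| ^ a :=
        Real.rpow_le_rpow (by positivity) hsin h0.le
      have h5 : 1 / |Real.sin θ| ^ a ≤ 1 / ((2/π)^a * |θ - k*π|^a) := by
        rw [← hrw]
        exact one_div_le_one_div_of_le (by rw [hrw]; positivity) h4
      have h6 : (1:ℝ) / ((2/π)^a * |θ - k*π|^a) = (π/2)^a * (1 / |θ - k*π|^a) := by
        rw [one_div, mul_inv, ← Real.inv_rpow (by positivity)]
        rw [show ((2:ℝ)/π)⁻¹ = π/2 by field_simp]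
        rw [one_div]
      rw [h6] at h5
      exact h5
    refine hstep.trans ?_
    have hsum : (1:ℝ) / |θ - k*π| ^ a ≤ ∑ j ∈ Finset.Icc (-4:ℤ) 4, 1 / |θ - j*π| ^ a :=
      Finset.single_le_sum (f := fun j : ℤ => 1 / |θ - j*π| ^ a)
        (fun j _ => by positivity) hmem
    exact mul_le_mul_of_nonneg_left hsum (by positivity)

lemma M_fin {a : ℝ} (h0 : 0 < a) (h1 : a < 1) :
    ∫⁻ θ in Icc (-(4*π)) (4*π), ENNReal.ofReal (1 / |Real.sin θ| ^ a) < ⊤ := by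
  have hπ := Real.pi_pos
  have hmeas : ∀ k : ℤ, Measurable
      (fun θ : ℝ => ENNReal.ofReal ((π/2)^a * (1 / |θ - k*π| ^ a))) := by
    intro k
    apply Measurable.ennreal_ofReal
    apply Measurable.const_mul
    simp only [one_div]
    exact (meas_rpow_abs h0.le _).inv
  calc ∫⁻ θ in Icc (-(4*π)) (4*π), ENNReal.ofReal (1 / |Real.sin θ| ^ a)
      ≤ ∫⁻ θ in Icc (-(4*π)) (4*π),
          ∑ k ∈ Finset.Icc (-4:ℤ) 4, ENNReal.ofReal ((π/2)^a * (1 / |θ - k*π| ^ a)) := by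
        apply setLIntegral_mono (Finset.measurable_sum _ fun k _ => hmeas k)
        intro θ hθ
        calc ENNReal.ofReal (1 / |Real.sin θ| ^ a)
            ≤ ENNReal.ofReal ((π/2)^a * ∑ k ∈ Finset.Icc (-4:ℤ) 4, 1 / |θ - k*π| ^ a) :=
              ENNReal.ofReal_le_ofReal (sin_pointwise h0 hθ)
          _ = ∑ k ∈ Finset.Icc (-4:ℤ) 4, ENNReal.ofReal ((π/2)^a * (1 / |θ - k*π| ^ a)) := by
              rw [Finset.mul_sum, ENNReal.ofReal_sum_of_nonneg (fun k _ => by positivity)]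
    _ = ∑ k ∈ Finset.Icc (-4:ℤ) 4, ∫⁻ θ in Icc (-(4*π)) (4*π),
          ENNReal.ofReal ((π/2)^a * (1 / |θ - k*π| ^ a)) :=
        lintegral_finset_sum _ fun k _ => hmeas k
    _ < ⊤ := by
        rw [ENNReal.sum_lt_top]
        intro k hk
        have hkr := Finset.mem_Icc.mp hk
        have hkabs : |(k:ℝ) * π| ≤ 4 * π := by
          rw [abs_mul, abs_of_pos hπ]
          have : |(k:ℝ)| ≤ 4 := by
            rw [abs_le]
            constructor <;> [exact_mod_cast hkr.1; exact_mod_cast hkr.2]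
          nlinarith
        have heq : ∀ θ : ℝ, ENNReal.ofReal ((π/2)^a * (1 / |θ - k*π| ^ a))
            = ENNReal.ofReal ((π/2)^a) * ENNReal.ofReal (1 / |θ - k*π| ^ a) := by
          intro θ
          rw [ENNReal.ofReal_mul (by positivity)]
        simp only [heq]
        rw [lintegral_const_mul' _ _ ENNReal.ofReal_ne_top]
        exact ENNReal.mul_lt_top ENNReal.ofReal_lt_top (single_fin h0 h1 hkabs)

lemma shift_bound {a t : ℝ} (ht : |t| ≤ 2*π) :
    ∫⁻ θ in Icc (0:ℝ) (2*π), ENNReal.ofReal (1 / |Real.sin (θ - t)| ^ a)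
      ≤ ∫⁻ θ in Icc (-(4*π)) (4*π), ENNReal.ofReal (1 / |Real.sin θ| ^ a) := by
  have hπ := Real.pi_pos
  have hmp : MeasurePreserving (fun x : ℝ => x - t) volume volume :=
    measurePreserving_sub_right volume t
  have hemb : MeasurableEmbedding (fun x : ℝ => x - t) :=
    (MeasurableEquiv.subRight t).measurableEmbedding
  have hcomp := hmp.setLIntegral_comp_emb hemb
    (fun u => ENNReal.ofReal (1 / |Real.sin u| ^ a)) (Icc 0 (2*π))
  rw [hcomp, Set.image_sub_const_Icc]
  have h2 := abs_le.mp ht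
  exact lintegral_mono_set (Icc_subset_Icc (by linarith) (by linarith))


lemma measure_le : (μH[1] : Measure (EuclideanSpace ℝ (Fin 2))).restrict (Metric.sphere 0 1) ≤
    Measure.map f ((volume : Measure ℝ).restrict (Icc 0 (2*π))) := by
  rw [Measure.le_iff]
  intro s hs
  rw [Measure.restrict_apply hs, Measure.map_apply f_meas hs,
    Measure.restrict_apply (f_meas hs)]
  have hsub : s ∩ Metric.sphere 0 1 ⊆ f '' (f ⁻¹' s ∩ Icc 0 (2*π)) := by
    rintro x ⟨hxs, hxsph⟩
    obtain ⟨θ, hθ, rfl⟩ := f_surj hxsph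
    exact ⟨θ, ⟨hxs, hθ⟩, rfl⟩
  have himg := f_lip.hausdorffMeasure_image_le (d := 1) (by norm_num)
    (f ⁻¹' s ∩ Icc 0 (2*π))
  rw [MeasureTheory.hausdorffMeasure_real] at himg
  simp only [ENNReal.coe_one, ENNReal.one_rpow, one_mul] at himg
  exact le_trans (measure_mono hsub) himg

theorem main : ∃ C : ℝ, 0 < C ∧
      ∀ (ξ : EuclideanSpace ℝ (Fin 2)), ξ ≠ 0 →
        ∀ r : ℝ, 0 < r →
          ∫⁻ ω in Metric.sphere (0 : EuclideanSpace ℝ (Fin 2)) 1,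
              ENNReal.ofReal
                (1 / (‖ξ - r • ω‖ ^ (1 - (1/80 : ℝ)) * ‖ξ + r • ω‖ ^ (1 - (1/80 : ℝ))))
              ∂(μH[1])
            ≤ ENNReal.ofReal (C / ‖ξ‖ ^ (2 - 2 * (1/80 : ℝ))) := by
  have hπ := Real.pi_pos
  set a : ℝ := 1 - (1/80 : ℝ) with ha
  have h0 : 0 < a := by norm_num [ha]
  have h1 : a < 1 := by norm_num [ha]
  set M : ℝ≥0∞ := ∫⁻ θ in Icc (-(4*π)) (4*π), ENNReal.ofReal (1 / |Real.sin θ| ^ a) with hM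
  have hMfin : M ≠ ⊤ := (M_fin h0 h1).ne
  have hexp : (2 : ℝ) - 2 * (1/80) = 2 * a := by norm_num [ha]
  refine ⟨M.toReal + 1, by positivity, ?_⟩
  intro ξ hξ r hr
  rw [hexp]
  set z : ℂ := iso.symm ξ with hz
  have hz0 : z ≠ 0 := by
    intro h
    apply hξ
    have := congrArg iso h
    rwa [hz, LinearIsometryEquiv.apply_symm_apply, map_zero] at this
  have hRnorm : ‖z‖ = ‖ξ‖ := by
    rw [hz, iso.symm.norm_map]
  have hξpos : (0:ℝ) < ‖ξ‖ := norm_pos_iff.mpr hξ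
  have gmeas : Measurable (fun ω : EuclideanSpace ℝ (Fin 2) =>
      ENNReal.ofReal (1 / (‖ξ - r • ω‖ ^ a * ‖ξ + r • ω‖ ^ a))) := by
    apply Measurable.ennreal_ofReal
    simp only [one_div]
    apply Measurable.inv
    apply Measurable.mul
    · exact (Real.continuous_rpow_const h0.le).measurable.comp
        (continuous_const.sub (continuous_id.const_smul r)).norm.measurable
    · exact (Real.continuous_rpow_const h0.le).measurable.comp
        (continuous_const.add (continuous_id.const_smul r)).norm.measurable
  have step1 : (∫⁻ ω in Metric.sphere (0 : EuclideanSpace ℝ (Fin 2)) 1,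
        ENNReal.ofReal (1 / (‖ξ - r • ω‖ ^ a * ‖ξ + r • ω‖ ^ a)) ∂μH[1])
      ≤ ∫⁻ θ in Icc (0:ℝ) (2*π),
          ENNReal.ofReal (1 / (‖ξ - r • f θ‖ ^ a * ‖ξ + r • f θ‖ ^ a)) := by
    calc (∫⁻ ω in Metric.sphere (0 : EuclideanSpace ℝ (Fin 2)) 1,
        ENNReal.ofReal (1 / (‖ξ - r • ω‖ ^ a * ‖ξ + r • ω‖ ^ a)) ∂μH[1])
        ≤ ∫⁻ ω, ENNReal.ofReal (1 / (‖ξ - r • ω‖ ^ a * ‖ξ + r • ω‖ ^ a))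
            ∂(Measure.map f ((volume : Measure ℝ).restrict (Icc 0 (2*π)))) :=
          lintegral_mono' measure_le le_rfl
      _ = _ := lintegral_map gmeas f_meas
  have hptwise : ∀ θ : ℝ, Real.sin (θ - z.arg) ≠ 0 →
      ENNReal.ofReal (1 / (‖ξ - r • f θ‖ ^ a * ‖ξ + r • f θ‖ ^ a))
        ≤ ENNReal.ofReal (1 / ‖ξ‖ ^ (2*a))
            * ENNReal.ofReal (1 / |Real.sin (θ - z.arg)| ^ a) := by
    intro θ hsθ
    have hsmul : iso ((r:ℂ) * Complex.exp (θ * Complex.I)) = r • f θ := by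
      rw [← Complex.real_smul, _root_.map_smul]
      rfl
    have hnorm1 : ‖ξ - r • f θ‖ = ‖z - (r:ℂ) * Complex.exp (θ * Complex.I)‖ := by
      rw [← iso.norm_map (z - (r:ℂ) * Complex.exp (θ * Complex.I)), map_sub, hsmul, hz,
        LinearIsometryEquiv.apply_symm_apply]
    have hnorm2 : ‖ξ + r • f θ‖ = ‖z + (r:ℂ) * Complex.exp (θ * Complex.I)‖ := by
      rw [← iso.norm_map (z + (r:ℂ) * Complex.exp (θ * Complex.I)), map_add, hsmul, hz,
        LinearIsometryEquiv.apply_symm_apply]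
    calc ENNReal.ofReal (1 / (‖ξ - r • f θ‖ ^ a * ‖ξ + r • f θ‖ ^ a))
        = ENNReal.ofReal (1 / (‖z - (r:ℂ) * Complex.exp (θ * Complex.I)‖ ^ a
            * ‖z + (r:ℂ) * Complex.exp (θ * Complex.I)‖ ^ a)) := by rw [hnorm1, hnorm2]
      _ ≤ ENNReal.ofReal (1 / (‖z‖ ^ (2*a) * |Real.sin (θ - z.arg)| ^ a)) :=
          ENNReal.ofReal_le_ofReal (point_bound z hz0 hr.le θ h0 hsθ)
      _ = ENNReal.ofReal (1 / ‖ξ‖ ^ (2*a))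
            * ENNReal.ofReal (1 / |Real.sin (θ - z.arg)| ^ a) := by
          rw [← ENNReal.ofReal_mul (by positivity), hRnorm, one_div_mul_one_div]
  have hae : ∀ᵐ θ ∂((volume : Measure ℝ).restrict (Icc (0:ℝ) (2*π))),
      ENNReal.ofReal (1 / (‖ξ - r • f θ‖ ^ a * ‖ξ + r • f θ‖ ^ a))
        ≤ ENNReal.ofReal (1 / ‖ξ‖ ^ (2*a))
            * ENNReal.ofReal (1 / |Real.sin (θ - z.arg)| ^ a) := by
    have hnull : (volume : Measure ℝ) {θ : ℝ | Real.sin (θ - z.arg) = 0} = 0 := by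
      have hsubc : {θ : ℝ | Real.sin (θ - z.arg) = 0}
          ⊆ Set.range (fun n : ℤ => z.arg + n * π) := by
        intro θ hθ
        obtain ⟨n, hn⟩ := Real.sin_eq_zero_iff.mp hθ
        exact ⟨n, show z.arg + (n:ℝ) * π = θ by linarith⟩
      exact measure_mono_null hsubc ((Set.countable_range _).measure_zero _)
    have hae0 : ∀ᵐ θ : ℝ ∂(volume : Measure ℝ), Real.sin (θ - z.arg) ≠ 0 := by
      rw [ae_iff]
      convert hnull using 2
      ext θ
      simp
    exact ae_restrict_of_ae (hae0.mono fun θ h => hptwise θ h)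
  have step2 : (∫⁻ θ in Icc (0:ℝ) (2*π),
        ENNReal.ofReal (1 / (‖ξ - r • f θ‖ ^ a * ‖ξ + r • f θ‖ ^ a)))
      ≤ ENNReal.ofReal (1 / ‖ξ‖ ^ (2*a))
          * ∫⁻ θ in Icc (0:ℝ) (2*π), ENNReal.ofReal (1 / |Real.sin (θ - z.arg)| ^ a) := by
    calc (∫⁻ θ in Icc (0:ℝ) (2*π),
        ENNReal.ofReal (1 / (‖ξ - r • f θ‖ ^ a * ‖ξ + r • f θ‖ ^ a)))
        ≤ ∫⁻ θ in Icc (0:ℝ) (2*π), ENNReal.ofReal (1 / ‖ξ‖ ^ (2*a))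
            * ENNReal.ofReal (1 / |Real.sin (θ - z.arg)| ^ a) := lintegral_mono_ae hae
      _ = _ := lintegral_const_mul' _ _ ENNReal.ofReal_ne_top
  have step3 : (∫⁻ θ in Icc (0:ℝ) (2*π), ENNReal.ofReal (1 / |Real.sin (θ - z.arg)| ^ a)) ≤ M :=
    shift_bound (le_trans (Complex.abs_arg_le_pi z) (by linarith))
  calc (∫⁻ ω in Metric.sphere (0 : EuclideanSpace ℝ (Fin 2)) 1,
        ENNReal.ofReal (1 / (‖ξ - r • ω‖ ^ a * ‖ξ + r • ω‖ ^ a)) ∂μH[1])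
      ≤ ENNReal.ofReal (1 / ‖ξ‖ ^ (2*a))
          * ∫⁻ θ in Icc (0:ℝ) (2*π), ENNReal.ofReal (1 / |Real.sin (θ - z.arg)| ^ a) :=
        le_trans step1 step2
    _ ≤ ENNReal.ofReal (1 / ‖ξ‖ ^ (2*a)) * M := mul_le_mul_right step3 _
    _ ≤ ENNReal.ofReal (1 / ‖ξ‖ ^ (2*a)) * ENNReal.ofReal (M.toReal + 1) := by
        apply mul_le_mul_right
        conv_lhs => rw [← ENNReal.ofReal_toReal hMfin]
        exact ENNReal.ofReal_le_ofReal (by linarith)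
    _ = ENNReal.ofReal ((M.toReal + 1) / ‖ξ‖ ^ (2*a)) := by
        rw [← ENNReal.ofReal_mul (by positivity), one_div_mul_eq_div]

end CircleEst

end

/-- With ε = 1/80, uniformly over all radii r > 0,
∫_{𝕊¹} |ξ − rω|^{-(1-ε)} |ξ + rω|^{-(1-ε)} dσ(ω) ≤ C |ξ|^{-(2-2ε)}. -/
theorem circle_integral_estimate :
    ∃ C : ℝ, 0 < C ∧
      ∀ (ξ : EuclideanSpace ℝ (Fin 2)), ξ ≠ 0 →
        ∀ r : ℝ, 0 < r →
          ∫⁻ ω in Metric.sphere (0 : EuclideanSpace ℝ (Fin 2)) 1,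
              ENNReal.ofReal
                (1 / (‖ξ - r • ω‖ ^ (1 - (1/80 : ℝ)) * ‖ξ + r • ω‖ ^ (1 - (1/80 : ℝ))))
              ∂(μH[1])
            ≤ ENNReal.ofReal (C / ‖ξ‖ ^ (2 - 2 * (1/80 : ℝ))) := by
  exact CircleEst.main
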